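/- Let X be a real normed linear space. Then DW_B(X) = sup{ 2‖u+v‖ / ‖u+v+δ(u−v)‖ : u, v ∈ S_X, u ⊥_B v, −1 < δ < 1 }. -/

import Mathlib

/-- `DW_B(X) = sup { 2‖u+v‖ / ‖u+v+δ(u−v)‖ : u, v ∈ S_X, u ⊥_B v, −1 < δ < 1 }`,
where `x ⊥_B y` means `‖x + λy‖ ≥ ‖x‖` for all real `λ`. -/
theorem dunkl_williams_birkhoff_eq_DWB4 {X : Type*} [NormedAddCommGroup X]
    [NormedSpace ℝ X] :
    sSup {c : ℝ | ∃ x y : X, x ≠ 0 ∧ y ≠ 0 ∧ (∀ l : ℝ, ‖x‖ ≤ ‖x + l • y‖) ∧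
      c = (‖x‖ + ‖y‖) / ‖x - y‖ * ‖‖x‖⁻¹ • x - ‖y‖⁻¹ • y‖} =
    sSup {c : ℝ | ∃ u v : X, ∃ δ : ℝ, ‖u‖ = 1 ∧ ‖v‖ = 1 ∧
      (∀ l : ℝ, ‖u‖ ≤ ‖u + l • v‖) ∧ -1 < δ ∧ δ < 1 ∧
      c = 2 * ‖u + v‖ / ‖u + v + δ • (u - v)‖} := by
  congr 1
  ext c
  constructor
  · rintro ⟨x, y, hx, hy, horth, rfl⟩
    have ha : (0 : ℝ) < ‖x‖ := norm_pos_iff.mpr hx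
    have hb : (0 : ℝ) < ‖y‖ := norm_pos_iff.mpr hy
    set a := ‖x‖ with ha'
    set b := ‖y‖ with hb'
    have hab : (0 : ℝ) < a + b := by linarith
    refine ⟨a⁻¹ • x, -(b⁻¹ • y), (a - b) / (a + b), ?_, ?_, ?_, ?_, ?_, ?_⟩
    · rw [norm_smul, norm_inv, Real.norm_of_nonneg ha.le, inv_mul_cancel₀ ha.ne']
    · rw [norm_neg, norm_smul, norm_inv, Real.norm_of_nonneg hb.le, inv_mul_cancel₀ hb.ne']
    · intro l
      have hvec : a⁻¹ • x + l • -(b⁻¹ • y) = a⁻¹ • (x + (-l * a / b) • y) := by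
        match_scalars <;> field_simp <;> ring
      rw [hvec, norm_smul, norm_smul, norm_inv, Real.norm_of_nonneg ha.le]
      exact mul_le_mul_of_nonneg_left (horth (-l * a / b)) (inv_nonneg.mpr ha.le)
    · rw [lt_div_iff₀ hab]; linarith
    · rw [div_lt_one hab]; linarith
    · have hvec : a⁻¹ • x + -(b⁻¹ • y) + ((a - b) / (a + b)) • (a⁻¹ • x - -(b⁻¹ • y))
          = (2 / (a + b)) • (x - y) := by
        match_scalars <;> field_simp <;> ring
      rw [hvec, norm_smul, Real.norm_of_nonneg (by positivity : (0:ℝ) ≤ 2 / (a + b))]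
      have hs : a⁻¹ • x + -(b⁻¹ • y) = a⁻¹ • x - b⁻¹ • y := by
        rw [sub_eq_add_neg]
      rw [hs]
      rcases eq_or_lt_of_le (norm_nonneg (x - y)) with ht | ht
      · rw [← ht]; simp
      · field_simp
  · rintro ⟨u, v, δ, hu, hv, horth, hδ1, hδ2, rfl⟩
    have hu0 : u ≠ 0 := by intro h; rw [h, norm_zero] at hu; norm_num at hu
    have hv0 : v ≠ 0 := by intro h; rw [h, norm_zero] at hv; norm_num at hv
    have hp : (0 : ℝ) < 1 + δ := by linarith
    have hm : (0 : ℝ) < 1 - δ := by linarith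
    refine ⟨(1 + δ) • u, (-(1 - δ)) • v, ?_, ?_, ?_, ?_⟩
    · exact smul_ne_zero hp.ne' hu0
    · exact smul_ne_zero (by linarith : -(1 - δ) ≠ 0) hv0
    · intro l
      have hnx : ‖(1 + δ) • u‖ = 1 + δ := by
        rw [norm_smul, Real.norm_of_nonneg hp.le, hu, mul_one]
      have hvec : (1 + δ) • u + l • ((-(1 - δ)) • v)
          = (1 + δ) • (u + (-l * (1 - δ) / (1 + δ)) • v) := by
        match_scalars <;> field_simp <;> ring
      rw [hnx, hvec, norm_smul, Real.norm_of_nonneg hp.le]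
      calc 1 + δ = (1 + δ) * ‖u‖ := by rw [hu, mul_one]
        _ ≤ (1 + δ) * ‖u + (-l * (1 - δ) / (1 + δ)) • v‖ :=
            mul_le_mul_of_nonneg_left (horth _) hp.le
    · have hnx : ‖(1 + δ) • u‖ = 1 + δ := by
        rw [norm_smul, Real.norm_of_nonneg hp.le, hu, mul_one]
      have hny : ‖(-(1 - δ)) • v‖ = 1 - δ := by
        rw [norm_smul, hv, mul_one, Real.norm_eq_abs, abs_neg, abs_of_pos hm]
      have hxu : ((1 + δ))⁻¹ • ((1 + δ) • u) = u := by
        rw [smul_smul, inv_mul_cancel₀ hp.ne', one_smul]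
      have hyv : ((1 - δ))⁻¹ • ((-(1 - δ)) • v) = -v := by
        rw [smul_smul]
        have : (1 - δ)⁻¹ * -(1 - δ) = -1 := by field_simp
        rw [this, neg_one_smul]
      have hsub : (1 + δ) • u - (-(1 - δ)) • v = u + v + δ • (u - v) := by
        module
      rw [hnx, hny, hxu, hyv, hsub, sub_neg_eq_add]
      have : (1 + δ) + (1 - δ) = 2 := by ring
      rw [this]
      ring
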